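/- Let G be a simple graph with vertex set {v_1,…,v_n} and edge set {e_1,…,e_m}, and let x_1,…,x_n ∈ {0,…,n−1}. For each i ∈ [n], define a_i ∈ {0,1}^{m+n(n−1)} as follows: for j ∈ [m], a_i[j] = 1 iff v_i is incident to e_j; among the n−1 'private' coordinates m+(i−1)(n−1)+1, …, m+i(n−1) of v_i, exactly x_i are set to 1 in a_i; and all remaining coordinates of a_i are 0. Then: (i) a_i has exactly deg(v_i) + x_i coordinates equal to 1; and (ii) for i ≠ j, the Hamming distance δ(a_i, a_j) equals deg(v_i) + x_i + deg(v_j) + x_j − 2 if v_i and v_j are adjacent in G, and equals deg(v_i) + x_i + deg(v_j) + x_j if they are nonadjacent. -/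
import Mathlib

open Finset

private lemma filter_sum_card {α β : Type*} [Fintype α] [Fintype β]
    (P : α ⊕ β → Prop) [DecidablePred P] :
    (Finset.univ.filter P).card =
      (Finset.univ.filter fun a => P (Sum.inl a)).card +
      (Finset.univ.filter fun b => P (Sum.inr b)).card := by
  rw [show Finset.univ.filter P =
      (Finset.univ.filter fun a => P (Sum.inl a)).disjSum
        (Finset.univ.filter fun b => P (Sum.inr b)) by
    ext c
    cases c <;> simp]
  exact Finset.card_disjSum _ _

theorem statement_14 {n m : ℕ} (G : SimpleGraph (Fin n)) [DecidableRel G.Adj]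
    (e : Fin m ≃ G.edgeSet) (x : Fin n → ℕ) (hx : ∀ i, x i < n)
    (a : Fin n → (Fin m ⊕ Fin n × Fin (n - 1)) → Bool)
    (ha1 : ∀ i j, a i (Sum.inl j) = true ↔ i ∈ (e j).1)
    (ha2 : ∀ i i' p, a i (Sum.inr (i', p)) = true → i' = i)
    (ha3 : ∀ i, (Finset.univ.filter fun p : Fin (n - 1) =>
      a i (Sum.inr (i, p)) = true).card = x i) :
    (∀ i, (Finset.univ.filter fun c => a i c = true).card = G.degree i + x i) ∧
    (∀ i j, i ≠ j →
      hammingDist (a i) (a j) =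
        if G.Adj i j then G.degree i + x i + (G.degree j + x j) - 2
        else G.degree i + x i + (G.degree j + x j)) := by
  -- edge coordinates count = degree
  have hedge : ∀ i : Fin n,
      (Finset.univ.filter fun jj : Fin m => a i (Sum.inl jj) = true).card = G.degree i := by
    intro i
    rw [← SimpleGraph.card_incidenceFinset_eq_degree]
    refine Finset.card_bij (fun jj _ => (e jj : Sym2 (Fin n))) ?_ ?_ ?_
    · intro jj hjj
      rw [Finset.mem_filter] at hjj
      rw [SimpleGraph.mem_incidenceFinset]
      exact ⟨(e jj).2, (ha1 i jj).mp hjj.2⟩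
    · intro a1 _ a2 _ h
      exact e.injective (Subtype.ext h)
    · intro E hE
      rw [SimpleGraph.mem_incidenceFinset] at hE
      refine ⟨e.symm ⟨E, hE.1⟩, ?_, by simp⟩
      rw [Finset.mem_filter]
      refine ⟨Finset.mem_univ _, (ha1 i _).mpr ?_⟩
      simp [hE.2]
  -- private coordinates count = x i
  have hpriv : ∀ i : Fin n,
      (Finset.univ.filter fun q : Fin n × Fin (n - 1) => a i (Sum.inr q) = true).card = x i := by
    intro i
    rw [← ha3 i]
    refine Finset.card_bij (fun q _ => q.2) ?_ ?_ ?_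
    · intro q hq
      rw [Finset.mem_filter] at hq ⊢
      have := ha2 i q.1 q.2 hq.2
      refine ⟨Finset.mem_univ _, ?_⟩
      rw [show ((i, q.2) : Fin n × Fin (n-1)) = q by rw [← this]]
      exact hq.2
    · intro q1 hq1 q2 hq2 h
      rw [Finset.mem_filter] at hq1 hq2
      have h1 := ha2 i q1.1 q1.2 hq1.2
      have h2 := ha2 i q2.1 q2.2 hq2.2
      exact Prod.ext (h1.trans h2.symm) h
    · intro p hp
      rw [Finset.mem_filter] at hp
      exact ⟨(i, p), Finset.mem_filter.mpr ⟨Finset.mem_univ _, hp.2⟩, rfl⟩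
  have part1 : ∀ i, (Finset.univ.filter fun c => a i c = true).card = G.degree i + x i := by
    intro i
    rw [filter_sum_card, hedge i, hpriv i]
  refine ⟨part1, ?_⟩
  intro i j hij
  set A := Finset.univ.filter fun c => a i c = true with hA
  set B := Finset.univ.filter fun c => a j c = true with hB
  -- intersection cardinality
  have hinter : (A ∩ B).card = if G.Adj i j then 1 else 0 := by
    rw [hA, hB, ← Finset.filter_and, filter_sum_card]
    have hinr : (Finset.univ.filter fun q : Fin n × Fin (n - 1) =>
        a i (Sum.inr q) = true ∧ a j (Sum.inr q) = true).card = 0 := by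
      rw [Finset.card_eq_zero]
      rw [Finset.filter_eq_empty_iff]
      rintro ⟨i', p⟩ _
      rintro ⟨h1, h2⟩
      exact hij ((ha2 i i' p h1).symm.trans (ha2 j i' p h2))
    rw [hinr, add_zero]
    by_cases hadj : G.Adj i j
    · rw [if_pos hadj]
      rw [show (Finset.univ.filter fun jj : Fin m =>
          a i (Sum.inl jj) = true ∧ a j (Sum.inl jj) = true) =
          {e.symm ⟨s(i, j), (G.mem_edgeSet.mpr hadj)⟩} by
        ext jj
        rw [Finset.mem_filter, Finset.mem_singleton, ha1, ha1]
        rw [Sym2.mem_and_mem_iff hij]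
        constructor
        · rintro ⟨-, h⟩
          rw [← e.symm_apply_apply jj]
          congr 1
          exact Subtype.ext h
        · rintro rfl
          simp]
      exact Finset.card_singleton _
    · rw [if_neg hadj, Finset.card_eq_zero, Finset.filter_eq_empty_iff]
      intro jj _
      rintro ⟨h1, h2⟩
      have heq : (e jj : Sym2 (Fin n)) = s(i, j) :=
        (Sym2.mem_and_mem_iff hij).mp ⟨(ha1 i jj).mp h1, (ha1 j jj).mp h2⟩
      exact hadj (G.mem_edgeSet.mp (heq ▸ (e jj).2))
  -- hamming distance = card of symmetric difference
  have hdist : hammingDist (a i) (a j) = (symmDiff A B).card := by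
    unfold hammingDist
    congr 1
    ext c
    rw [Finset.mem_symmDiff, hA, hB]
    simp only [Finset.mem_filter, Finset.mem_univ, true_and, ne_eq]
    cases hic : a i c <;> cases hjc : a j c <;> simp
  have hsi : symmDiff A B ∪ A ∩ B = A ∪ B := by
    have := symmDiff_sup_inf A B
    simpa [Finset.sup_eq_union, Finset.inf_eq_inter] using this
  have h1 : (symmDiff A B).card + (A ∩ B).card = (A ∪ B).card := by
    rw [← hsi]
    exact (Finset.card_union_of_disjoint (disjoint_symmDiff_inf A B)).symm
  have h2 := Finset.card_union_add_card_inter A B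
  have hAc : A.card = G.degree i + x i := part1 i
  have hBc : B.card = G.degree j + x j := part1 j
  by_cases hadj : G.Adj i j
  · have hd1 : 1 ≤ G.degree i := by
      rw [← SimpleGraph.card_neighborFinset_eq_degree]
      exact Finset.card_pos.mpr ⟨j, by simp [hadj]⟩
    have hd2 : 1 ≤ G.degree j := by
      rw [← SimpleGraph.card_neighborFinset_eq_degree]
      exact Finset.card_pos.mpr ⟨i, by simp [hadj.symm]⟩
    rw [if_pos hadj] at hinter ⊢
    rw [hdist]
    omega
  · rw [if_neg hadj] at hinter ⊢
    rw [hdist]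
    omega
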